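/- For real numbers p, q ≥ 0 and integers k, l ≥ 0 with k + l = n, the image of the prismatic map μ^{k,l}_{p,q} : Δᵏ_p × Δˡ_q → Δⁿ_{p+q} is exactly the set {u ∈ Δⁿ_{p+q} : ∑_{i=0}^{k−1} uᵢ ≤ p ≤ ∑_{i=0}^{k} uᵢ}. -/

import Mathlib

open Topology

/-- The scaled `n`-simplex `Δⁿ_p ⊆ ℝ^{n+1}`. -/
def SSimplex (n : ℕ) (p : ℝ) : Type :=
  {t : Fin (n + 1) → ℝ // (∀ i, 0 ≤ t i) ∧ ∑ i, t i = p}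

instance (n : ℕ) (p : ℝ) : TopologicalSpace (SSimplex n p) :=
  inferInstanceAs (TopologicalSpace {t : Fin (n + 1) → ℝ // (∀ i, 0 ≤ t i) ∧ ∑ i, t i = p})

/-- The underlying formula of the prismatic map:
`((s₀,…,s_k),(t₀,…,t_l)) ↦ (s₀,…,s_{k−1}, s_k + t₀, t₁,…,t_l)`. -/
def prismFun (k l : ℕ) (s : Fin (k + 1) → ℝ) (t : Fin (l + 1) → ℝ) :
    Fin (k + l + 1) → ℝ :=
  (Fin.append (Fin.init s) (Fin.cons (s (Fin.last k) + t 0) (Fin.tail t)) :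
    Fin (k + (l + 1)) → ℝ)

theorem prismFun_mem {k l : ℕ} {p q : ℝ} {s : Fin (k + 1) → ℝ} {t : Fin (l + 1) → ℝ}
    (hs : (∀ i, 0 ≤ s i) ∧ ∑ i, s i = p) (ht : (∀ i, 0 ≤ t i) ∧ ∑ i, t i = q) :
    (∀ i, 0 ≤ prismFun k l s t i) ∧ ∑ i, prismFun k l s t i = p + q := by
  have key : (∀ i : Fin (k + (l + 1)),
        0 ≤ Fin.append (Fin.init s) (Fin.cons (s (Fin.last k) + t 0) (Fin.tail t)) i) ∧
      ∑ i : Fin (k + (l + 1)),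
        Fin.append (Fin.init s) (Fin.cons (s (Fin.last k) + t 0) (Fin.tail t)) i = p + q := by
    constructor
    · intro i
      refine Fin.addCases (fun j => ?_) (fun j => ?_) i
      · rw [Fin.append_left]
        exact hs.1 _
      · rw [Fin.append_right]
        refine Fin.cases ?_ (fun j => ?_) j
        · simpa using add_nonneg (hs.1 _) (ht.1 _)
        · simpa [Fin.tail] using ht.1 _
    · rw [Fin.sum_univ_add]
      simp only [Fin.append_left, Fin.append_right]
      rw [Fin.sum_cons]
      have h1 : ∑ i : Fin (k + 1), s i = ∑ i : Fin k, Fin.init s i + s (Fin.last k) := by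
        rw [Fin.sum_univ_castSucc]
        simp [Fin.init]
      have h2 : ∑ i : Fin (l + 1), t i = t 0 + ∑ i : Fin l, Fin.tail t i := by
        rw [Fin.sum_univ_succ]
        simp [Fin.tail]
      rw [← hs.2, ← ht.2, h1, h2]
      ring
  exact key

/-- The prismatic map `μ^{k,l}_{p,q} : Δᵏ_p × Δˡ_q → Δ^{k+l}_{p+q}`. -/
def prismMap (k l : ℕ) (p q : ℝ) (x : SSimplex k p × SSimplex l q) :
    SSimplex (k + l) (p + q) :=
  ⟨prismFun k l x.1.1 x.2.1, prismFun_mem x.1.2 x.2.2⟩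

/-- The sum of the first `m` coordinates `∑_{i=0}^{m-1} uᵢ` of a point of `ℝ^{n+1}`. -/
def partialSum {n : ℕ} (u : Fin (n + 1) → ℝ) (m : ℕ) : ℝ :=
  ∑ i ∈ Finset.univ.filter (fun i : Fin (n + 1) => (i : ℕ) < m), u i

lemma partialSum_eq {n m : ℕ} (h : m ≤ n+1) (v : Fin (n+1) → ℝ) :
    partialSum v m = ∑ i : Fin m, v (Fin.castLE h i) := by
  have h2 := Finset.sum_map Finset.univ (Fin.castLEEmb h) v
  simp only [Fin.castLEEmb_apply] at h2
  unfold partialSum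
  rw [← h2]
  congr 1
  ext i
  simp only [Finset.mem_filter, Finset.mem_map, Finset.mem_univ, true_and, Fin.castLEEmb_apply]
  constructor
  · intro hi; exact ⟨⟨i, hi⟩, Fin.ext rfl⟩
  · rintro ⟨j, rfl⟩; exact j.2

lemma partialSum_succ {n m : ℕ} (h : m < n+1) (v : Fin (n+1) → ℝ) :
    partialSum v (m+1) = partialSum v m + v ⟨m, h⟩ := by
  rw [partialSum_eq h.le, partialSum_eq (by omega : m + 1 ≤ n + 1), Fin.sum_univ_castSucc]
  rfl

lemma tail_sum (k l : ℕ) (u : Fin (k+l+1) → ℝ) :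
    ∑ i ∈ Finset.univ.filter (fun i : Fin (k+l+1) => ¬ (i : ℕ) < k+1), u i
      = ∑ j : Fin l, u ⟨k+1+j, by omega⟩ := by
  have h2 := Finset.sum_map Finset.univ
    ⟨fun j : Fin l => (⟨k+1+j, by omega⟩ : Fin (k+l+1)),
      (show Function.Injective (fun j : Fin l => (⟨k+1+j, by omega⟩ : Fin (k+l+1))) from
        by intro a b hab; simp only [Fin.mk.injEq] at hab; exact Fin.ext (by omega))⟩ u
  simp only [Function.Embedding.coeFn_mk] at h2
  rw [← h2]
  congr 1
  ext i
  simp only [Finset.mem_filter, Finset.mem_map, Finset.mem_univ, true_and, not_lt,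
    Function.Embedding.coeFn_mk]
  constructor
  · intro hi
    exact ⟨⟨i - (k+1), by omega⟩, Fin.ext (by simp; omega)⟩
  · rintro ⟨j, rfl⟩; simp

/-- For `p, q ≥ 0`, the image of the prismatic map
`μ^{k,l}_{p,q} : Δᵏ_p × Δˡ_q → Δ^{k+l}_{p+q}` is exactly
`{u ∈ Δ^{k+l}_{p+q} : ∑_{i=0}^{k−1} uᵢ ≤ p ≤ ∑_{i=0}^{k} uᵢ}`. -/
theorem range_prismMap (k l : ℕ) (p q : ℝ) (hp : 0 ≤ p) (hq : 0 ≤ q) :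
    Set.range (prismMap k l p q) =
      {u : SSimplex (k + l) (p + q) | partialSum u.1 k ≤ p ∧ p ≤ partialSum u.1 (k + 1)} := by
  ext u
  simp only [Set.mem_range, Set.mem_setOf_eq]
  constructor
  · rintro ⟨⟨⟨s, hs⟩, ⟨t, ht⟩⟩, rfl⟩
    have hinit : ∀ i : Fin k,
        prismFun k l s t (Fin.castLE (by omega : k ≤ k + l + 1) i) = Fin.init s i := by
      intro i
      show Fin.append (Fin.init s) (Fin.cons (s (Fin.last k) + t 0) (Fin.tail t))
        (Fin.castAdd (l+1) i) = _
      rw [Fin.append_left]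
    have hsum : ∑ i : Fin k, Fin.init s i = p - s (Fin.last k) := by
      have h := hs.2
      rw [Fin.sum_univ_castSucc] at h
      simp only [Fin.init]
      linarith
    have hAval : partialSum (prismFun k l s t) k = p - s (Fin.last k) := by
      rw [partialSum_eq (by omega : k ≤ k + l + 1)]
      rw [Finset.sum_congr rfl fun i _ => hinit i]
      exact hsum
    have hk : prismFun k l s t ⟨k, by omega⟩ = s (Fin.last k) + t 0 := by
      show Fin.append (Fin.init s) (Fin.cons (s (Fin.last k) + t 0) (Fin.tail t))
        (Fin.natAdd k (0 : Fin (l+1))) = _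
      rw [Fin.append_right, Fin.cons_zero]
    have hBval := partialSum_succ (by omega : k < k + l + 1) (prismFun k l s t)
    rw [hk, hAval] at hBval
    constructor
    · show partialSum (prismFun k l s t) k ≤ p
      rw [hAval]; have := hs.1 (Fin.last k); linarith
    · show p ≤ partialSum (prismFun k l s t) (k+1)
      rw [hBval]; have := ht.1 0; linarith
  · rintro ⟨h1, h2⟩
    obtain ⟨u, hu⟩ := u
    simp only at h1 h2 ⊢
    have hBA := partialSum_succ (by omega : k < k + l + 1) u
    have hukk : 0 ≤ u ⟨k, by omega⟩ := hu.1 _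
    have hsplit := Finset.sum_filter_add_sum_filter_not Finset.univ
      (fun i : Fin (k+l+1) => (i:ℕ) < k+1) u
    rw [tail_sum k l u] at hsplit
    have hfirst : ∑ i ∈ Finset.univ.filter (fun i : Fin (k+l+1) => (i:ℕ) < k+1), u i
        = partialSum u (k+1) := rfl
    rw [hfirst, hu.2] at hsplit
    have hAeq : ∑ i : Fin k, u ⟨(i : ℕ), by omega⟩ = partialSum u k := by
      rw [partialSum_eq (by omega : k ≤ k + l + 1)]
      rfl
    set s' : Fin (k+1) → ℝ :=
      Fin.snoc (fun i : Fin k => u ⟨(i : ℕ), by omega⟩) (p - partialSum u k) with hs'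
    set t' : Fin (l+1) → ℝ :=
      Fin.cons (partialSum u (k+1) - p) (fun j : Fin l => u ⟨k+1+(j : ℕ), by omega⟩) with ht'
    refine ⟨(⟨s', ?_, ?_⟩, ⟨t', ?_, ?_⟩), ?_⟩
    · intro i
      refine Fin.lastCases ?_ (fun j => ?_) i
      · rw [hs', Fin.snoc_last]; linarith
      · rw [hs', Fin.snoc_castSucc]; exact hu.1 _
    · rw [Fin.sum_univ_castSucc]
      simp only [hs', Fin.snoc_castSucc, Fin.snoc_last]
      rw [hAeq]; ring
    · intro j
      refine Fin.cases ?_ (fun j' => ?_) j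
      · rw [ht', Fin.cons_zero]; linarith
      · rw [ht', Fin.cons_succ]; exact hu.1 _
    · rw [Fin.sum_univ_succ]
      simp only [ht', Fin.cons_zero, Fin.cons_succ]
      linarith
    · apply Subtype.ext
      show prismFun k l s' t' = u
      funext i
      refine Fin.addCases (m := k) (n := l + 1) (fun j => ?_) (fun j => ?_) i
      · show Fin.append (Fin.init s') (Fin.cons (s' (Fin.last k) + t' 0) (Fin.tail t'))
          (Fin.castAdd (l+1) j) = u (Fin.castAdd (l+1) j)
        rw [Fin.append_left, hs', Fin.init_snoc]
        exact congrArg u (Fin.ext rfl)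
      · show Fin.append (Fin.init s') (Fin.cons (s' (Fin.last k) + t' 0) (Fin.tail t'))
          (Fin.natAdd k j) = u (Fin.natAdd k j)
        rw [Fin.append_right]
        refine Fin.cases ?_ (fun j' => ?_) j
        · rw [Fin.cons_zero, hs', Fin.snoc_last, ht', Fin.cons_zero]
          have hnat : u (Fin.natAdd k (0 : Fin (l+1))) = u ⟨k, by omega⟩ :=
            congrArg u (Fin.ext (by simp))
          rw [hnat]; linarith
        · rw [Fin.cons_succ, ht', Fin.tail_cons]
          exact congrArg u (Fin.ext (by simp [Fin.natAdd]; omega))
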